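/- Let ε > 0, t ∈ (0,1), and let K₀, K₁ be symmetric positive definite n×n matrices. Set N₁₀ = (I + (16/ε²)·K₁^{1/2} K₀ K₁^{1/2})^{1/2}. Then ((1−t)²ε²/16)·K₁^{−1/2}·(−I + ((4t/((1−t)ε))·K₁ + N₁₀)²)·K₁^{−1/2} = (1−t)²·K₀ + t²·K₁ + t(1−t)·(R₀₁ + R₁₀), where R₀₁ = K₀^{1/2}((ε²/16)·I + K₀^{1/2}K₁K₀^{1/2})^{1/2}K₀^{−1/2} and R₁₀ = K₁^{1/2}((ε²/16)·I + K₁^{1/2}K₀K₁^{1/2})^{1/2}K₁^{−1/2}. -/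

import Mathlib

open Matrix
open scoped Classical

noncomputable section

/-- The unique symmetric positive semidefinite square root of a positive
semidefinite matrix (junk value `0` otherwise). -/
def sqrtm {n : ℕ} (A : Matrix (Fin n) (Fin n) ℝ) : Matrix (Fin n) (Fin n) ℝ :=
  if h : A.PosSemidef then
    (h.1.eigenvectorUnitary : Matrix (Fin n) (Fin n) ℝ) *
      diagonal (Real.sqrt ∘ h.1.eigenvalues) *
      (star h.1.eigenvectorUnitary : Matrix (Fin n) (Fin n) ℝ)
  else 0

end

noncomputable def Matrix.PosSemidef.sqrt {n : ℕ} {A : Matrix (Fin n) (Fin n) ℝ}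
    (h : A.PosSemidef) : Matrix (Fin n) (Fin n) ℝ :=
  (h.1.eigenvectorUnitary : Matrix (Fin n) (Fin n) ℝ) *
    diagonal (Real.sqrt ∘ h.1.eigenvalues) *
    (star h.1.eigenvectorUnitary : Matrix (Fin n) (Fin n) ℝ)

open scoped MatrixOrder in
lemma Matrix.PosSemidef.sqrt_eq_cfcSqrt {n : ℕ} {A : Matrix (Fin n) (Fin n) ℝ}
    (h : A.PosSemidef) : h.sqrt = CFC.sqrt A := by
  rw [CFC.sqrt_eq_cfc, cfc_nnreal_eq_real _ A h.nonneg, h.1.cfc_eq]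
  simp [IsHermitian.cfc, Matrix.PosSemidef.sqrt, Function.comp_def,
    Real.coe_sqrt, Real.coe_toNNReal', max_eq_left, h.eigenvalues_nonneg]

open scoped MatrixOrder in
lemma Matrix.PosSemidef.posSemidef_sqrt {n : ℕ} {A : Matrix (Fin n) (Fin n) ℝ}
    (h : A.PosSemidef) : h.sqrt.PosSemidef := by
  rw [h.sqrt_eq_cfcSqrt]; exact (CFC.sqrt_nonneg A).posSemidef

open scoped MatrixOrder in
lemma Matrix.PosSemidef.sqrt_mul_self {n : ℕ} {A : Matrix (Fin n) (Fin n) ℝ}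
    (h : A.PosSemidef) : h.sqrt * h.sqrt = A := by
  rw [h.sqrt_eq_cfcSqrt]; exact CFC.sqrt_mul_sqrt_self A h.nonneg

open scoped MatrixOrder in
lemma Matrix.PosSemidef.sq_sqrt {n : ℕ} {A : Matrix (Fin n) (Fin n) ℝ}
    (h : A.PosSemidef) : h.sqrt ^ 2 = A := by
  rw [h.sqrt_eq_cfcSqrt]; exact CFC.sq_sqrt A h.nonneg

open scoped MatrixOrder in
lemma Matrix.PosSemidef.eq_sqrt_of_sq_eq {n : ℕ} {A B : Matrix (Fin n) (Fin n) ℝ}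
    (hB : B.PosSemidef) (hA : A.PosSemidef) (hBA : B ^ 2 = A) : B = hA.sqrt := by
  rw [hA.sqrt_eq_cfcSqrt, eq_comm, CFC.sqrt_eq_iff A B hA.nonneg hB.nonneg, ← pow_two, hBA]

variable {n : ℕ}

lemma sqrtm_eq {A : Matrix (Fin n) (Fin n) ℝ} (h : A.PosSemidef) : sqrtm A = h.sqrt := dif_pos h

lemma sqrtm_psd {A : Matrix (Fin n) (Fin n) ℝ} (h : A.PosSemidef) : (sqrtm A).PosSemidef := by
  rw [sqrtm_eq h]; exact h.posSemidef_sqrt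

lemma sqrtm_mul_self {A : Matrix (Fin n) (Fin n) ℝ} (h : A.PosSemidef) :
    sqrtm A * sqrtm A = A := by
  rw [sqrtm_eq h]; exact h.sqrt_mul_self

lemma psd_smul {A : Matrix (Fin n) (Fin n) ℝ} (h : A.PosSemidef) {r : ℝ} (hr : 0 ≤ r) :
    (r • A).PosSemidef := by
  constructor
  · unfold Matrix.IsHermitian
    rw [conjTranspose_smul, h.1.eq]
    simp
  · intro x
    exact (h.smul hr).2 x

lemma sqrtm_smul {A : Matrix (Fin n) (Fin n) ℝ} (h : A.PosSemidef) {r : ℝ} (hr : 0 ≤ r) :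
    sqrtm ((r * r) • A) = r • sqrtm A := by
  have h2 : ((r * r) • A).PosSemidef := psd_smul h (mul_nonneg hr hr)
  rw [sqrtm_eq h2, sqrtm_eq h]
  refine ((psd_smul h.posSemidef_sqrt hr).eq_sqrt_of_sq_eq h2 ?_).symm
  rw [smul_pow, pow_two, h.sq_sqrt]

lemma conj_mul_conj {V A B : Matrix (Fin n) (Fin n) ℝ} (hUV : star V * V = 1) :
    V * A * star V * (V * B * star V) = V * (A * B) * star V := by
  have h : V * A * star V * (V * B * star V) = V * (A * ((star V * V) * (B * star V))) := by
    simp only [Matrix.mul_assoc]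
  rw [h, hUV, one_mul]
  simp only [Matrix.mul_assoc]

lemma commute_sqrt_shift {Z : Matrix (Fin n) (Fin n) ℝ} (hZ : Z.PosSemidef) {c : ℝ} (hc : 0 ≤ c)
    (hA : (c • 1 + Z * Z).PosSemidef) : Z * hA.sqrt = hA.sqrt * Z := by
  set V : Matrix (Fin n) (Fin n) ℝ := (hZ.1.eigenvectorUnitary : Matrix (Fin n) (Fin n) ℝ) with hV
  have hUV : star V * V = 1 := mem_unitaryGroup_iff'.mp hZ.1.eigenvectorUnitary.2
  have hVU : V * star V = 1 := mem_unitaryGroup_iff.mp hZ.1.eigenvectorUnitary.2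
  set e : Fin n → ℝ := hZ.1.eigenvalues with he
  have hZspec : Z = V * diagonal e * star V := by
    have := hZ.1.spectral_theorem
    simpa using this
  set d : Fin n → ℝ := fun i => Real.sqrt (c + e i * e i) with hd
  set Y : Matrix (Fin n) (Fin n) ℝ := V * diagonal d * star V with hY
  have hYpsd : Y.PosSemidef := by
    rw [hY, Matrix.star_eq_conjTranspose]
    exact (PosSemidef.diagonal (fun i => Real.sqrt_nonneg _)).mul_mul_conjTranspose_same V
  have hDD : diagonal d * diagonal d = c • 1 + diagonal e * diagonal e := by
    rw [diagonal_mul_diagonal, diagonal_mul_diagonal, Matrix.smul_one_eq_diagonal, diagonal_add]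
    have h2 : (fun i => d i * d i) = fun i => c + e i * e i := by
      funext i; exact Real.mul_self_sqrt (add_nonneg hc (mul_self_nonneg _))
    rw [h2]
  have hconst : V * (c • (1 : Matrix (Fin n) (Fin n) ℝ)) * star V = c • 1 := by
    rw [Matrix.mul_smul, Matrix.mul_one, Matrix.smul_mul, hVU]
  have hYsq : Y ^ 2 = c • 1 + Z * Z := by
    rw [pow_two, hY, conj_mul_conj hUV, hDD, Matrix.mul_add, Matrix.add_mul,
      hconst, ← conj_mul_conj hUV, ← hZspec]
  rw [(hYpsd.eq_sqrt_of_sq_eq hA hYsq).symm, hY, hZspec, conj_mul_conj hUV, conj_mul_conj hUV,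
    diagonal_mul_diagonal, diagonal_mul_diagonal]
  have h3 : (fun i => e i * d i) = fun i => d i * e i := funext fun i => mul_comm _ _
  rw [h3]

lemma sqrtm_conj_orth {A U : Matrix (Fin n) (Fin n) ℝ} (hA : A.PosSemidef)
    (hUV : star U * U = 1) (hVU : U * star U = 1) :
    sqrtm (U * A * star U) = U * sqrtm A * star U := by
  have hpsd : (U * A * star U).PosSemidef := by
    rw [Matrix.star_eq_conjTranspose]; exact hA.mul_mul_conjTranspose_same U
  rw [sqrtm_eq hpsd, sqrtm_eq hA]
  have hYpsd : (U * hA.sqrt * star U).PosSemidef := by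
    rw [Matrix.star_eq_conjTranspose]; exact hA.posSemidef_sqrt.mul_mul_conjTranspose_same U
  exact (hYpsd.eq_sqrt_of_sq_eq hpsd
    (by rw [pow_two, conj_mul_conj hUV, hA.sqrt_mul_self])).symm

lemma key_intertwine {S T : Matrix (Fin n) (Fin n) ℝ} (hS : S.PosSemidef) (hT : T.PosSemidef)
    (hdS : IsUnit S.det) (hdT : IsUnit T.det) {c : ℝ} (hc : 0 ≤ c) :
    sqrtm (c • 1 + S * (T * T) * S) * (S * T) = (S * T) * sqrtm (c • 1 + T * (S * S) * T) := by
  set P := S * T with hP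
  have hPs : star P = T * S := by
    rw [hP, Matrix.star_eq_conjTranspose, conjTranspose_mul, hS.1.eq, hT.1.eq]
  have hPtP : (star P * P).PosSemidef := by
    rw [Matrix.star_eq_conjTranspose]; exact posSemidef_conjTranspose_mul_self P
  set Z := sqrtm (star P * P) with hZdef
  have hZpsd : Z.PosSemidef := sqrtm_psd hPtP
  have hZZ : Z * Z = star P * P := sqrtm_mul_self hPtP
  have hdP : IsUnit P.det := by rw [hP, det_mul]; exact hdS.mul hdT
  have hdZ : IsUnit Z.det := by
    have h1 : Z.det * Z.det = P.det * P.det := by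
      rw [← det_mul, hZZ, det_mul, Matrix.star_eq_conjTranspose, det_conjTranspose]
      simp
    exact isUnit_of_mul_isUnit_left (h1 ▸ (hdP.mul hdP))
  have hZinv : Z⁻¹ * Z = 1 := nonsing_inv_mul Z hdZ
  have hZinv' : Z * Z⁻¹ = 1 := mul_nonsing_inv Z hdZ
  set U := P * Z⁻¹ with hU
  have hsU : star U = Z⁻¹ * star P := by
    rw [hU, Matrix.star_mul]
    congr 1
    rw [Matrix.star_eq_conjTranspose, conjTranspose_nonsing_inv, hZpsd.1.eq]
  have hUtU : star U * U = 1 := by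
    rw [hsU, hU]
    have h2 : Z⁻¹ * star P * (P * Z⁻¹) = Z⁻¹ * (star P * P) * Z⁻¹ := by
      simp only [Matrix.mul_assoc]
    rw [h2, ← hZZ]
    have h3 : Z⁻¹ * (Z * Z) * Z⁻¹ = (Z⁻¹ * Z) * (Z * Z⁻¹) := by simp only [Matrix.mul_assoc]
    rw [h3, hZinv, hZinv', one_mul]
  have hUUt : U * star U = 1 := mul_eq_one_comm.mp hUtU
  have hUZ : U * Z = P := by rw [hU, Matrix.mul_assoc, hZinv, Matrix.mul_one]
  have hZsU : Z * star U = star P := by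
    rw [hsU, ← Matrix.mul_assoc, hZinv', one_mul]
  have hone : ((1 : Matrix (Fin n) (Fin n) ℝ)).PosSemidef := PosSemidef.one
  have hA : (c • 1 + star P * P).PosSemidef := (psd_smul hone hc).add hPtP
  have hBeq : c • 1 + P * star P = U * (c • 1 + star P * P) * star U := by
    rw [Matrix.mul_add, Matrix.add_mul]
    congr 1
    · rw [Matrix.mul_smul, Matrix.mul_one, Matrix.smul_mul, hUUt]
    · rw [← hZZ]
      have h4 : U * (Z * Z) * star U = (U * Z) * (Z * star U) := by simp only [Matrix.mul_assoc]
      rw [h4, hUZ, hZsU]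
  have hPPt : P * star P = S * (T * T) * S := by
    rw [hPs, hP]; simp only [Matrix.mul_assoc]
  have hPtP' : star P * P = T * (S * S) * T := by
    rw [hPs, hP]; simp only [Matrix.mul_assoc]
  have hQconj : sqrtm (c • 1 + P * star P) = U * sqrtm (c • 1 + star P * P) * star U := by
    rw [hBeq, sqrtm_conj_orth hA hUtU hUUt]
  have hAZ : (c • 1 + Z * Z).PosSemidef := by rw [hZZ]; exact hA
  have hcomm : Z * sqrtm (c • 1 + star P * P) = sqrtm (c • 1 + star P * P) * Z := by
    have h5 : sqrtm (c • 1 + star P * P) = hAZ.sqrt := by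
      rw [← hZZ, sqrtm_eq hAZ]
    rw [h5]
    exact commute_sqrt_shift hZpsd hc hAZ
  have hsUP : star U * P = Z := by
    rw [hsU, Matrix.mul_assoc, ← hZZ, ← Matrix.mul_assoc, hZinv, one_mul]
  rw [← hPPt, ← hPtP', hQconj]
  have h6 : U * sqrtm (c • 1 + star P * P) * star U * P
      = U * (sqrtm (c • 1 + star P * P) * (star U * P)) := by simp only [Matrix.mul_assoc]
  rw [h6, hsUP, ← hcomm, ← Matrix.mul_assoc, hUZ]

theorem stmt_7 {n : ℕ} (ε t : ℝ) (hε : 0 < ε) (ht : t ∈ Set.Ioo (0 : ℝ) 1)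
    (K₀ K₁ : Matrix (Fin n) (Fin n) ℝ) (hK₀ : K₀.PosDef) (hK₁ : K₁.PosDef)
    (N₁₀ R₀₁ R₁₀ : Matrix (Fin n) (Fin n) ℝ)
    (hN : N₁₀ = sqrtm (1 + (16 / ε ^ 2) • (sqrtm K₁ * K₀ * sqrtm K₁)))
    (hR₀₁ : R₀₁ = sqrtm K₀ * sqrtm ((ε ^ 2 / 16) • 1 + sqrtm K₀ * K₁ * sqrtm K₀) * (sqrtm K₀)⁻¹)
    (hR₁₀ : R₁₀ = sqrtm K₁ * sqrtm ((ε ^ 2 / 16) • 1 + sqrtm K₁ * K₀ * sqrtm K₁) * (sqrtm K₁)⁻¹) :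
    ((1 - t) ^ 2 * ε ^ 2 / 16) •
        ((sqrtm K₁)⁻¹ * (-1 + ((4 * t / ((1 - t) * ε)) • K₁ + N₁₀) ^ 2) * (sqrtm K₁)⁻¹) =
      (1 - t) ^ 2 • K₀ + t ^ 2 • K₁ + (t * (1 - t)) • (R₀₁ + R₁₀) := by
  obtain ⟨ht0, ht1⟩ := ht
  have h1t : (0:ℝ) < 1 - t := by linarith
  have hεne : ε ≠ 0 := ne_of_gt hε
  have h1tne : (1:ℝ) - t ≠ 0 := ne_of_gt h1t
  set S := sqrtm K₁ with hSdef
  set T := sqrtm K₀ with hTdef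
  have hK₁psd := hK₁.posSemidef
  have hK₀psd := hK₀.posSemidef
  have hSpsd : S.PosSemidef := sqrtm_psd hK₁psd
  have hTpsd : T.PosSemidef := sqrtm_psd hK₀psd
  have hS2 : S * S = K₁ := sqrtm_mul_self hK₁psd
  have hT2 : T * T = K₀ := sqrtm_mul_self hK₀psd
  have hdS : IsUnit S.det := by
    have h1 : S.det * S.det = K₁.det := by rw [← det_mul, hS2]
    exact isUnit_of_mul_isUnit_left (h1 ▸ hK₁.det_pos.ne'.isUnit)
  have hdT : IsUnit T.det := by
    have h1 : T.det * T.det = K₀.det := by rw [← det_mul, hT2]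
    exact isUnit_of_mul_isUnit_left (h1 ▸ hK₀.det_pos.ne'.isUnit)
  have hSinv : S⁻¹ * S = 1 := nonsing_inv_mul S hdS
  have hSinv' : S * S⁻¹ = 1 := mul_nonsing_inv S hdS
  have hTinv' : T * T⁻¹ = 1 := mul_nonsing_inv T hdT
  have cancelS : ∀ X : Matrix (Fin n) (Fin n) ℝ, S⁻¹ * (S * X) = X := fun X => by
    rw [← Matrix.mul_assoc, hSinv, one_mul]
  set c := ε^2/16 with hc
  have hc0 : (0:ℝ) < c := by positivity
  have hM₁psd : (S * K₀ * S).PosSemidef := by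
    have h1 := hK₀psd.mul_mul_conjTranspose_same S
    rwa [hSpsd.1.eq] at h1
  have hone : ((1:Matrix (Fin n) (Fin n) ℝ)).PosSemidef := Matrix.PosSemidef.one
  have hA₁ : (c • 1 + S * K₀ * S).PosSemidef := (psd_smul hone hc0.le).add hM₁psd
  set Q₁ := sqrtm (c • 1 + S * K₀ * S) with hQ₁def
  set Q₀ := sqrtm (c • 1 + T * K₁ * T) with hQ₀def
  have hQ₁sq : Q₁ * Q₁ = c • 1 + S * K₀ * S := sqrtm_mul_self hA₁
  have hb2 : (4/ε) * (4/ε) = 16 / ε^2 := by field_simp; ring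
  have hNQ : N₁₀ = (4/ε) • Q₁ := by
    rw [hN]
    have harg : (1 : Matrix (Fin n) (Fin n) ℝ) + (16/ε^2) • (S * K₀ * S)
        = ((4/ε) * (4/ε)) • (c • 1 + S * K₀ * S) := by
      rw [smul_add, smul_smul, hb2]
      congr 1
      · have h1 : 16 / ε^2 * c = 1 := by rw [hc]; field_simp
        rw [h1, one_smul]
    rw [harg, sqrtm_smul hA₁ (by positivity)]
  -- the key intertwining
  have hkey : Q₁ * (S * T) = (S * T) * Q₀ := by
    have h1 := key_intertwine hSpsd hTpsd hdS hdT hc0.le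
    rwa [hT2, hS2] at h1
  have hG₂ : S⁻¹ * Q₁ * S = T * Q₀ * T⁻¹ := by
    have e1 : S⁻¹ * (Q₁ * (S * T)) * T⁻¹ = S⁻¹ * Q₁ * S := by
      simp only [Matrix.mul_assoc, hTinv', Matrix.mul_one]
    have e2 : S⁻¹ * ((S * T) * Q₀) * T⁻¹ = T * Q₀ * T⁻¹ := by
      simp only [Matrix.mul_assoc]
      rw [cancelS]
    rw [← e1, hkey, e2]
  have i1 : S⁻¹ * (K₁ * K₁) * S⁻¹ = K₁ := by
    rw [← hS2]
    simp only [Matrix.mul_assoc, hSinv', Matrix.mul_one]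
    rw [cancelS]
  have i2 : S⁻¹ * (K₁ * Q₁) * S⁻¹ = S * Q₁ * S⁻¹ := by
    rw [← hS2]
    simp only [Matrix.mul_assoc]
    rw [cancelS]
  have i3 : S⁻¹ * (Q₁ * K₁) * S⁻¹ = S⁻¹ * Q₁ * S := by
    rw [← hS2]
    simp only [Matrix.mul_assoc, hSinv', Matrix.mul_one]
  have i4 : S⁻¹ * (S * K₀ * S) * S⁻¹ = K₀ := by
    simp only [Matrix.mul_assoc, hSinv', Matrix.mul_one]
    rw [cancelS]
  set a := 4 * t / ((1 - t) * ε) with ha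
  set k := (1 - t) ^ 2 * ε ^ 2 / 16 with hk
  have hQQ : ((4/ε) * (4/ε)) • (Q₁ * Q₁) = 1 + (16/ε^2) • (S * K₀ * S) := by
    rw [hQ₁sq, smul_add, smul_smul, hb2]
    congr 1
    rw [show (16/ε^2 * c : ℝ) = 1 by rw [hc]; field_simp, one_smul]
  have hsq : (a • K₁ + (4/ε) • Q₁) ^ 2
      = (a*a) • (K₁ * K₁) + (a*(4/ε)) • (K₁ * Q₁) + (a*(4/ε)) • (Q₁ * K₁)
        + ((4/ε)*(4/ε)) • (Q₁ * Q₁) := by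
    rw [pow_two, Matrix.add_mul, Matrix.mul_add, Matrix.mul_add]
    simp only [Matrix.smul_mul, Matrix.mul_smul, smul_smul]
    module
  have hX : (-1 + (a • K₁ + (4/ε) • Q₁) ^ 2 : Matrix (Fin n) (Fin n) ℝ)
      = (a*a) • (K₁ * K₁) + (a*(4/ε)) • (K₁ * Q₁) + (a*(4/ε)) • (Q₁ * K₁)
        + (16/ε^2) • (S * K₀ * S) := by
    rw [hsq, hQQ]
    abel
  rw [hNQ, hR₀₁, hR₁₀, ← hG₂, hX]
  simp only [Matrix.mul_add, Matrix.add_mul, Matrix.mul_smul, Matrix.smul_mul]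
  rw [i1, i2, i3, i4]
  have s1 : k * (a*a) = t^2 := by rw [hk, ha]; field_simp; ring
  have s2 : k * (a*(4/ε)) = t*(1-t) := by rw [hk, ha]; field_simp; ring
  have s3 : k * (16/ε^2) = (1-t)^2 := by rw [hk]; field_simp
  simp only [smul_add, smul_smul, s1, s2, s3]
  abel
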